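/- If (B_i) is a sequence in 2^X (X a compact metric space) converging in the Hausdorff metric to a totally disconnected compact set C, then the component diameters Cdiam(B_i) converge to 0, where Cdiam(B) is the supremum of the diameters of the connected components of B. -/

import Mathlib

open TopologicalSpace Filter Metric Set

/-- Auxiliary: a totally disconnected nonempty compact set in a compact metric space can be
covered by countably many pairwise disjoint open sets of diameter at most `ε`. -/
lemma stmt_18_aux (X : Type*) [MetricSpace X] [CompactSpace X]
    (C : NonemptyCompacts X) (hC : IsTotallyDisconnected (C : Set X))
    {ε : ℝ} (hε : 0 < ε) :
    ∃ U : ℕ → Set X, (∀ j, IsOpen (U j)) ∧ Pairwise (Function.onFun Disjoint U) ∧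
      (∀ j, Metric.diam (U j) ≤ ε) ∧ (C : Set X) ⊆ ⋃ j, U j := by
  haveI : CompactSpace (C : Set X) := isCompact_iff_compactSpace.mp C.isCompact
  haveI : TotallyDisconnectedSpace (C : Set X) :=
    totallyDisconnectedSpace_subtype_iff.2 hC
  -- clopen pieces of small diameter
  have key : ∀ c : (C : Set X), ∃ W : Set (C : Set X),
      IsClopen W ∧ c ∈ W ∧ W ⊆ Subtype.val ⁻¹' Metric.ball (c : X) (ε/4) := by
    intro c
    obtain ⟨W, hW, hcW, hWsub⟩ := compact_exists_isClopen_in_isOpen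
      (Metric.isOpen_ball.preimage continuous_subtype_val)
      (show c ∈ Subtype.val ⁻¹' Metric.ball (c : X) (ε/4) from
        Metric.mem_ball_self (by linarith))
    exact ⟨W, hW, hcW, hWsub⟩
  choose W hWclopen hmemW hWsub using key
  obtain ⟨t, ht⟩ := isCompact_univ.elim_finite_subcover W (fun c => (hWclopen c).2)
    (fun x _ => mem_iUnion.2 ⟨x, hmemW x⟩)
  set l := t.toList with hl
  -- the finite family, reindexed by ℕ
  set f : ℕ → Set (C : Set X) := fun k =>
    if h : k < l.length then W (l.get ⟨k, h⟩) else ∅ with hf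
  have hfclopen : ∀ k, IsClopen (f k) := by
    intro k
    rw [hf]
    dsimp only
    split_ifs
    · exact hWclopen _
    · exact isClopen_empty
  have hcover : (univ : Set (C : Set X)) ⊆ ⋃ k, f k := by
    intro x _
    obtain ⟨c, hct, hxc⟩ := mem_iUnion₂.1 (ht (mem_univ x))
    obtain ⟨i, hi⟩ := List.mem_iff_get.1 (Finset.mem_toList.2 hct)
    refine mem_iUnion.2 ⟨i.1, ?_⟩
    rw [hf]
    dsimp only
    rw [dif_pos i.isLt, Fin.eta, hi]
    exact hxc
  -- disjointify
  set g : ℕ → Set (C : Set X) := disjointed f with hg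
  have hps : ∀ k, IsClopen ((partialSups f k : Set (C : Set X))) := by
    intro k
    induction k with
    | zero => simpa using hfclopen 0
    | succ k ih =>
      rw [partialSups_add_one]
      exact ih.union (hfclopen _)
  have hgclopen : ∀ k, IsClopen (g k) := by
    intro k
    rw [hg]
    cases k with
    | zero => rw [disjointed_zero]; exact hfclopen 0
    | succ k => rw [disjointed_add_one]; exact (hfclopen _).diff (hps k)
  set L : ℕ → Set X := fun k => Subtype.val '' g k with hL
  have hLcompact : ∀ k, IsCompact (L k) :=
    fun k => ((hgclopen k).1.isCompact).image continuous_subtype_val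
  have hLdisj : Pairwise (Function.onFun Disjoint L) := fun j k hjk =>
    (Set.disjoint_image_iff Subtype.val_injective).2 ((disjoint_disjointed f) hjk)
  have hLsubf : ∀ k, g k ⊆ f k := fun k => disjointed_subset f k
  have hLempty : ∀ k, ¬ k < l.length → L k = ∅ := by
    intro k hk
    have hfk : f k = ∅ := dif_neg hk
    have : g k = ∅ := subset_empty_iff.1 (hfk ▸ hLsubf k)
    simp [hL, this]
  have hLdiam : ∀ k, Metric.diam (L k) ≤ ε/2 := by
    intro k
    by_cases h : k < l.length
    · have hsub : L k ⊆ Metric.ball ((l.get ⟨k, h⟩ : (C : Set X)) : X) (ε/4) := by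
        rintro x ⟨a, ha, rfl⟩
        have haf : a ∈ f k := hLsubf k ha
        rw [hf] at haf
        dsimp only at haf
        rw [dif_pos h] at haf
        exact hWsub _ haf
      calc Metric.diam (L k) ≤ Metric.diam (Metric.ball ((l.get ⟨k, h⟩ : (C : Set X)) : X) (ε/4)) :=
            Metric.diam_mono hsub Metric.isBounded_ball
        _ ≤ 2 * (ε/4) := Metric.diam_ball (by linarith)
        _ = ε/2 := by ring
    · rw [hLempty k h]
      simp
      positivity
  have hLunion : (C : Set X) ⊆ ⋃ k, L k := by
    intro x hx
    have hmem : (⟨x, hx⟩ : (C : Set X)) ∈ ⋃ k, g k := by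
      rw [hg, iUnion_disjointed]
      exact hcover (mem_univ _)
    obtain ⟨k, hk⟩ := mem_iUnion.1 hmem
    exact mem_iUnion.2 ⟨k, ⟨_, hk, rfl⟩⟩
  -- the list is nonempty
  have hn : 0 < l.length := by
    by_contra h
    obtain ⟨c, hc⟩ := C.nonempty
    obtain ⟨k, hk⟩ := mem_iUnion.1 (hcover (mem_univ ⟨c, hc⟩))
    rw [hf] at hk
    dsimp only at hk
    rw [dif_neg (by omega)] at hk
    exact hk
  -- separation constants
  have hsep : ∀ k, ∃ δ > 0, Disjoint (Metric.thickening δ (L k))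
      (Metric.thickening δ (⋃ j ∈ (Finset.range l.length).erase k, L j)) := by
    intro k
    refine Disjoint.exists_thickenings ?_ (hLcompact k)
      (((Finset.range l.length).erase k).isCompact_biUnion (fun j _ => hLcompact j)).isClosed
    rw [Set.disjoint_left]
    intro a ha ha'
    simp only [mem_iUnion] at ha'
    obtain ⟨j, hj, haj⟩ := ha'
    have hjk : j ≠ k := (Finset.mem_erase.1 hj).1
    exact Set.disjoint_left.1 (hLdisj (Ne.symm hjk)) ha haj
  choose δf hδfpos hδfdisj using hsep
  set δ : ℝ := min (ε/4) ((Finset.range l.length).inf'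
    ⟨0, Finset.mem_range.2 hn⟩ δf) with hδ
  have hδpos : 0 < δ :=
    lt_min (by linarith) ((Finset.lt_inf'_iff _).2 fun j _ => hδfpos j)
  have hδle : ∀ j, j < l.length → δ ≤ δf j := fun j hj =>
    le_trans (min_le_right _ _) (Finset.inf'_le δf (Finset.mem_range.2 hj))
  refine ⟨fun k => Metric.thickening δ (L k), fun k => Metric.isOpen_thickening,
    ?_, ?_, ?_⟩
  · -- pairwise disjoint
    intro j k hjk
    by_cases hj : j < l.length
    · have h1 : Metric.thickening δ (L j) ⊆ Metric.thickening (δf j) (L j) :=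
        Metric.thickening_mono (hδle j hj) _
      have hk' : L k ⊆ ⋃ m ∈ (Finset.range l.length).erase j, L m := by
        by_cases hkn : k < l.length
        · intro x hx
          exact mem_biUnion (Finset.mem_erase.2 ⟨Ne.symm hjk, Finset.mem_range.2 hkn⟩) hx
        · rw [hLempty k hkn]; exact empty_subset _
      have h2 : Metric.thickening δ (L k) ⊆
          Metric.thickening (δf j) (⋃ m ∈ (Finset.range l.length).erase j, L m) :=
        (Metric.thickening_subset_of_subset δ hk').trans
          (Metric.thickening_mono (hδle j hj) _)
      exact (hδfdisj j).mono h1 h2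
    · rw [show Function.onFun Disjoint (fun k => Metric.thickening δ (L k)) j k ↔
          Disjoint (Metric.thickening δ (L j)) (Metric.thickening δ (L k)) from Iff.rfl,
        hLempty j hj, Metric.thickening_empty]
      exact disjoint_bot_left
  · -- diameter bound
    intro k
    have hδ4 : δ ≤ ε/4 := min_le_left _ _
    calc Metric.diam (Metric.thickening δ (L k)) ≤ Metric.diam (L k) + 2 * δ :=
          Metric.diam_thickening_le _ hδpos.le
      _ ≤ ε/2 + 2 * (ε/4) := by
          have := hLdiam k
          nlinarith
      _ = ε := by ring
  · -- covers C
    exact hLunion.trans (iUnion_mono fun k => Metric.self_subset_thickening hδpos _)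

/-- If a sequence `(B_i)` in `2^X` (with `X` a compact metric space) converges in the
Hausdorff metric to a totally disconnected compact set `C`, then the component diameters
`Cdiam(B_i) = sup {d(x,y) : x, y in the same connected component of B_i}` tend to `0`. -/
theorem stmt_18 (X : Type*) [MetricSpace X] [CompactSpace X]
    (B : ℕ → NonemptyCompacts X) (C : NonemptyCompacts X)
    (hC : IsTotallyDisconnected (C : Set X))
    (hconv : Tendsto B atTop (nhds C)) :
    Tendsto (fun i =>
        sSup {r : ℝ | ∃ x ∈ (B i : Set X), ∃ y ∈ (B i : Set X),
          connectedComponentIn (B i : Set X) x = connectedComponentIn (B i : Set X) y ∧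
          r = dist x y})
      atTop (nhds 0) := by
  rw [Metric.tendsto_atTop] at hconv ⊢
  intro ε hε
  obtain ⟨U, hUopen, hUdisj, hUdiam, hCU⟩ := stmt_18_aux X C hC (show (0:ℝ) < ε/2 by linarith)
  have hVopen : IsOpen (⋃ j, U j) := isOpen_iUnion hUopen
  obtain ⟨δ, hδpos, hδsub⟩ := C.isCompact.exists_thickening_subset_open hVopen hCU
  obtain ⟨N, hN⟩ := hconv δ hδpos
  refine ⟨N, fun i hi => ?_⟩
  have hBV : (B i : Set X) ⊆ ⋃ j, U j := by
    refine subset_trans ?_ hδsub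
    intro x hx
    have hd : hausdorffDist (B i : Set X) (C : Set X) < δ := by
      rw [← NonemptyCompacts.dist_eq]
      exact hN i hi
    have fin : EMetric.hausdorffEdist (B i : Set X) (C : Set X) ≠ ⊤ :=
      hausdorffEdist_ne_top_of_nonempty_of_bounded (B i).nonempty C.nonempty
        (B i).isCompact.isBounded C.isCompact.isBounded
    obtain ⟨y, hy, hxy⟩ := exists_dist_lt_of_hausdorffDist_lt hx hd fin
    exact Metric.mem_thickening_iff.2 ⟨y, hy, hxy⟩
  set S := {r : ℝ | ∃ x ∈ (B i : Set X), ∃ y ∈ (B i : Set X),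
      connectedComponentIn (B i : Set X) x = connectedComponentIn (B i : Set X) y ∧
      r = dist x y} with hS
  have hSle : ∀ r ∈ S, r ≤ ε/2 := by
    rintro r ⟨x, hx, y, hy, hcomp, rfl⟩
    have hxK : x ∈ connectedComponentIn (B i : Set X) x := mem_connectedComponentIn hx
    have hyK : y ∈ connectedComponentIn (B i : Set X) x := by
      rw [hcomp]; exact mem_connectedComponentIn hy
    have hK : IsPreconnected (connectedComponentIn (B i : Set X) x) :=
      isPreconnected_connectedComponentIn
    have hKsub : connectedComponentIn (B i : Set X) x ⊆ ⋃ j, U j :=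
      (connectedComponentIn_subset _ _).trans hBV
    obtain ⟨j, hxj⟩ := mem_iUnion.1 (hKsub hxK)
    have hKU : connectedComponentIn (B i : Set X) x ⊆ U j := by
      refine hK.subset_left_of_subset_union (v := ⋃ k, ⋃ (_ : k ≠ j), U k) (hUopen j)
        (isOpen_iUnion fun k => isOpen_iUnion fun _ => hUopen k) ?_ ?_ ⟨x, hxK, hxj⟩
      · rw [Set.disjoint_left]
        intro a ha hav
        simp only [mem_iUnion] at hav
        obtain ⟨k, hkj, hak⟩ := hav
        exact Set.disjoint_left.1 (hUdisj (Ne.symm hkj)) ha hak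
      · intro a ha
        obtain ⟨k, hak⟩ := mem_iUnion.1 (hKsub ha)
        by_cases hk : k = j
        · exact Or.inl (hk ▸ hak)
        · exact Or.inr (mem_iUnion.2 ⟨k, mem_iUnion.2 ⟨hk, hak⟩⟩)
    have hb : Bornology.IsBounded (U j) := isCompact_univ.isBounded.subset (subset_univ _)
    calc dist x y ≤ Metric.diam (U j) := Metric.dist_le_diam_of_mem hb (hKU hxK) (hKU hyK)
      _ ≤ ε/2 := hUdiam j
  have h0S : (0:ℝ) ∈ S := by
    obtain ⟨x, hx⟩ := (B i).nonempty
    exact ⟨x, hx, x, hx, rfl, (dist_self x).symm⟩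
  have hbdd : BddAbove S := ⟨ε/2, fun r hr => hSle r hr⟩
  have h1 : sSup S ≤ ε/2 := Real.sSup_le hSle (by linarith)
  have h2 : (0:ℝ) ≤ sSup S := le_csSup hbdd h0S
  simp only [Real.dist_eq, sub_zero]
  rw [abs_of_nonneg h2]
  linarith
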